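/- Let A, A_1, ..., A_N be symmetric d×d matrices with A = (1/N)∑A_i, ‖A_i − A‖ ≤ δ, ‖A‖ ≤ β, and 0 < η ≤ min(1/(21δK), 1/β) for integer K ≥ 1. Consider the deterministic recursion y_k = y_{k−1} − η(A_i(y_{k−1} − x⋆) + (A − A_i)(x − x⋆)) started at y_0 = x. Then for each k ≤ K: ‖y_k − x‖² ≤ (1 + 1/(2K))‖y_{k−1} − x‖² + 7Kη²‖A(y_{k−1} − x⋆)‖². -/

import Mathlib

lemma step3_aux (Kr e : ℝ) (hKr : 1 ≤ Kr) (he0 : 0 ≤ e) (heK : e * Kr ≤ 1 / 21) :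
    (1 + 1 / (7 * Kr - 1)) * (1 + e) ^ 2 ≤ 1 + 1 / (2 * Kr) := by
  have hKr0 : (0:ℝ) < Kr := lt_of_lt_of_le one_pos hKr
  have h7K : (0:ℝ) < 7 * Kr - 1 := by linarith
  have h1 : 1 + 1 / (7 * Kr - 1) = 7 * Kr / (7 * Kr - 1) := by field_simp; ring
  have h2 : 1 + 1 / (2 * Kr) = (2 * Kr + 1) / (2 * Kr) := by field_simp
  rw [h1, h2, div_mul_eq_mul_div, div_le_div_iff₀ h7K (by positivity)]
  nlinarith [mul_le_mul_of_nonneg_left heK (by positivity : (0:ℝ) ≤ 28 * Kr),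
    mul_self_le_mul_self (mul_nonneg he0 hKr0.le) heK, hKr]

lemma sq_add_le_aux (a s c c' : ℝ) (hc : 0 < c) (hcc : c * c' = 1) :
    (a + s) ^ 2 ≤ (1 + c) * a ^ 2 + (1 + c') * s ^ 2 := by
  nlinarith [sq_nonneg (c * a - s), sq_nonneg a, sq_nonneg s, hc.le]

/-- Noiseless client-drift bound for SCAFFOLD on quadratics: for symmetric operators
`A i` with mean `A`, `‖A i − A‖ ≤ δ`, `‖A‖ ≤ β`, step-size
`0 < η ≤ min(1/(21δK), 1/β)`, the recursion
`y_k = y_{k−1} − η(A_i(y_{k−1} − x⋆) + (A − A_i)(x − x⋆))`, `y_0 = x`, satisfies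
`‖y_k − x‖² ≤ (1 + 1/(2K))‖y_{k−1} − x‖² + 7Kη²‖A(y_{k−1} − x⋆)‖²`. -/
theorem scaffold_drift_bound_quadratic {d N : ℕ}
    (A : Fin N → EuclideanSpace ℝ (Fin d) →L[ℝ] EuclideanSpace ℝ (Fin d))
    (hsym : ∀ i, IsSelfAdjoint (A i))
    (Abar : EuclideanSpace ℝ (Fin d) →L[ℝ] EuclideanSpace ℝ (Fin d))
    (hAbar : Abar = (N : ℝ)⁻¹ • ∑ i, A i)
    (δ β : ℝ) (hδ : 0 < δ) (hβ : 0 < β)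
    (hdiss : ∀ i, ‖A i - Abar‖ ≤ δ) (hAnorm : ‖Abar‖ ≤ β)
    (K : ℕ) (hK : 1 ≤ K)
    (η : ℝ) (hη0 : 0 < η) (hη : η ≤ min (1 / (21 * δ * (K : ℝ))) (1 / β))
    (i : Fin N) (x xstar : EuclideanSpace ℝ (Fin d))
    (y : ℕ → EuclideanSpace ℝ (Fin d)) (hy0 : y 0 = x)
    (hrec : ∀ k, y (k + 1) = y k - η • ((A i) (y k - xstar) + (Abar - A i) (x - xstar))) :
    ∀ k, 1 ≤ k → k ≤ K →
      ‖y k - x‖ ^ 2 ≤ (1 + 1 / (2 * (K : ℝ))) * ‖y (k - 1) - x‖ ^ 2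
        + 7 * (K : ℝ) * η ^ 2 * ‖Abar (y (k - 1) - xstar)‖ ^ 2 := by
  intro k hk1 hkK
  obtain ⟨m, rfl⟩ : ∃ m, k = m + 1 := ⟨k - 1, (Nat.succ_pred_eq_of_pos hk1).symm⟩
  simp only [Nat.add_sub_cancel]
  set Kr : ℝ := (K : ℝ) with hKrdef
  have hKr : (1 : ℝ) ≤ Kr := by rw [hKrdef]; exact_mod_cast hK
  set z := y m - x with hz
  set w := Abar (y m - xstar) with hw
  set B := A i - Abar with hB
  -- key algebraic rewrite
  have key : y (m + 1) - x = (z - η • B z) - η • w := by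
    rw [hrec m]
    simp only [hz, hw, hB, ContinuousLinearMap.sub_apply, map_sub, smul_sub, smul_add]
    abel
  -- bound on ‖B z‖
  have hBz : ‖B z‖ ≤ δ * ‖z‖ :=
    (B.le_opNorm z).trans (mul_le_mul_of_nonneg_right (hdiss i) (norm_nonneg z))
  set e : ℝ := η * δ with hedef
  have he0 : 0 ≤ e := by positivity
  have heK : e * Kr ≤ 1 / 21 := by
    have h1 : η ≤ 1 / (21 * δ * Kr) := le_trans hη (min_le_left _ _)
    have hKr0 : 0 < Kr := lt_of_lt_of_le one_pos hKr
    have h2 : 0 < 21 * δ * Kr := by positivity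
    calc e * Kr = η * (δ * Kr) := by ring
    _ ≤ (1 / (21 * δ * Kr)) * (δ * Kr) := by
        apply mul_le_mul_of_nonneg_right h1; positivity
    _ = 1 / 21 := by field_simp
  set a := ‖z - η • B z‖ with ha
  set t := ‖z‖ with ht
  have ht0 : 0 ≤ t := norm_nonneg _
  have ha0 : 0 ≤ a := norm_nonneg _
  have haet : a ≤ (1 + e) * t := by
    calc a ≤ ‖z‖ + ‖η • B z‖ := norm_sub_le _ _
    _ = t + η * ‖B z‖ := by rw [norm_smul, Real.norm_of_nonneg hη0.le]
    _ ≤ t + η * (δ * t) := by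
        gcongr
    _ = (1 + e) * t := by rw [hedef]; ring
  set s := η * ‖w‖ with hs
  have hs0 : 0 ≤ s := by positivity
  have hne : ‖y (m + 1) - x‖ ≤ a + s := by
    rw [key]
    calc ‖(z - η • B z) - η • w‖ ≤ ‖z - η • B z‖ + ‖η • w‖ := norm_sub_le _ _
    _ = a + s := by rw [norm_smul, Real.norm_of_nonneg hη0.le]
  have hKr0 : 0 < Kr := lt_of_lt_of_le one_pos hKr
  have h7K : (0 : ℝ) < 7 * Kr - 1 := by linarith
  have step1 : (a + s) ^ 2 ≤ (1 + 1 / (7 * Kr - 1)) * a ^ 2 + (7 * Kr) * s ^ 2 := by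
    have := sq_add_le_aux a s (1 / (7 * Kr - 1)) (7 * Kr - 1) (by positivity)
      (by field_simp)
    calc (a + s) ^ 2 ≤ (1 + 1 / (7 * Kr - 1)) * a ^ 2 + (1 + (7 * Kr - 1)) * s ^ 2 := this
    _ = (1 + 1 / (7 * Kr - 1)) * a ^ 2 + (7 * Kr) * s ^ 2 := by ring
  have step2 : a ^ 2 ≤ (1 + e) ^ 2 * t ^ 2 := by
    calc a ^ 2 ≤ ((1 + e) * t) ^ 2 := by
          apply pow_le_pow_left₀ ha0 haet
    _ = (1 + e) ^ 2 * t ^ 2 := by ring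
  have step3 : (1 + 1 / (7 * Kr - 1)) * (1 + e) ^ 2 ≤ 1 + 1 / (2 * Kr) :=
    step3_aux Kr e hKr he0 heK
  have hc1 : (0:ℝ) ≤ 1 + 1 / (7 * Kr - 1) := by positivity
  have step4 : (a + s) ^ 2 ≤ (1 + 1 / (2 * Kr)) * t ^ 2 + 7 * Kr * s ^ 2 := by
    have h2 : (1 + 1 / (7 * Kr - 1)) * a ^ 2 ≤ (1 + 1 / (2 * Kr)) * t ^ 2 := by
      calc (1 + 1 / (7 * Kr - 1)) * a ^ 2
          ≤ (1 + 1 / (7 * Kr - 1)) * ((1 + e) ^ 2 * t ^ 2) :=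
            mul_le_mul_of_nonneg_left step2 hc1
      _ = ((1 + 1 / (7 * Kr - 1)) * (1 + e) ^ 2) * t ^ 2 := by ring
      _ ≤ (1 + 1 / (2 * Kr)) * t ^ 2 :=
            mul_le_mul_of_nonneg_right step3 (sq_nonneg t)
    linarith [step1]
  have hfinal : ‖y (m + 1) - x‖ ^ 2 ≤ (a + s) ^ 2 :=
    pow_le_pow_left₀ (norm_nonneg _) hne 2
  have hs2 : 7 * Kr * s ^ 2 = 7 * Kr * η ^ 2 * ‖w‖ ^ 2 := by rw [hs]; ring
  linarith [step4, hfinal, hs2.le, hs2.ge]
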